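/- Let G be a linearly ordered group which is not densely ordered, and let τ be a Hausdorff topology on 𝓑⁺(G) such that for every s ∈ 𝓑⁺(G) the left translation x ↦ s·x and the right translation x ↦ x·s are continuous. Then the topological space (𝓑⁺(G), τ) is discrete. -/

import Mathlib

/-- The multiplication of the bicyclic extension `𝓑(G) = G × G` of a linearly ordered
group `G`: `(a,b)·(c,d) = (c·b⁻¹·a, d)` if `b < c`; `(a,d)` if `b = c`;
`(a, b·c⁻¹·d)` if `b > c`. -/
def bmul {G : Type*} [Group G] [LinearOrder G] (s t : G × G) : G × G :=
  if s.2 < t.1 then (t.1 * s.2⁻¹ * s.1, t.2)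
  else if s.2 = t.1 then (s.1, t.2)
  else (s.1, s.2 * t.1⁻¹ * t.2)

/-- `𝓑⁺(G)` is closed under the multiplication of `𝓑(G)`. -/
theorem bmul_mem {G : Type*} [Group G] [LinearOrder G]
    [CovariantClass G G (· * ·) (· ≤ ·)]
    [CovariantClass G G (Function.swap (· * ·)) (· ≤ ·)]
    {s t : G × G} (hs : 1 ≤ s.1 ∧ 1 ≤ s.2) (ht : 1 ≤ t.1 ∧ 1 ≤ t.2) :
    1 ≤ (bmul s t).1 ∧ 1 ≤ (bmul s t).2 := by
  unfold bmul
  split_ifs with h1 h2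
  · refine ⟨?_, ht.2⟩
    have hb : (1 : G) ≤ t.1 * s.2⁻¹ := by
      have := mul_le_mul' h1.le (le_refl s.2⁻¹)
      rwa [mul_inv_cancel] at this
    calc (1 : G) = 1 * 1 := (one_mul 1).symm
    _ ≤ (t.1 * s.2⁻¹) * s.1 := mul_le_mul' hb hs.1
  · exact ⟨hs.1, ht.2⟩
  · refine ⟨hs.1, ?_⟩
    have hlt : t.1 < s.2 := lt_of_le_of_ne (not_lt.mp h1) (fun h => h2 h.symm)
    have hb : (1 : G) ≤ s.2 * t.1⁻¹ := by
      have := mul_le_mul' hlt.le (le_refl t.1⁻¹)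
      rwa [mul_inv_cancel] at this
    calc (1 : G) = 1 * 1 := (one_mul 1).symm
    _ ≤ (s.2 * t.1⁻¹) * t.2 := mul_le_mul' hb ht.2

/-- The subsemigroup `𝓑⁺(G)` of `𝓑(G)`, consisting of all pairs `(a,b)` with
`1 ≤ a` and `1 ≤ b`, as a type. -/
def BPlus (G : Type*) [Group G] [LinearOrder G] : Type _ :=
  {p : G × G // 1 ≤ p.1 ∧ 1 ≤ p.2}

/-- The multiplication on `𝓑⁺(G)`, inherited from `𝓑(G)`. -/
def bmulPos {G : Type*} [Group G] [LinearOrder G]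
    [CovariantClass G G (· * ·) (· ≤ ·)]
    [CovariantClass G G (Function.swap (· * ·)) (· ≤ ·)]
    (s t : BPlus G) : BPlus G :=
  ⟨bmul s.1 t.1, bmul_mem s.2 t.2⟩

section Aux
variable {G : Type*} [Group G] [LinearOrder G]
    [CovariantClass G G (· * ·) (· ≤ ·)]
    [CovariantClass G G (Function.swap (· * ·)) (· ≤ ·)]

lemma bmul_of_lt {s t : G × G} (h : s.2 < t.1) :
    bmul s t = (t.1 * s.2⁻¹ * s.1, t.2) := by
  unfold bmul; rw [if_pos h]

lemma bmul_of_eq' {s t : G × G} (h : s.2 = t.1) :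
    bmul s t = (s.1, t.2) := by
  unfold bmul
  rw [if_neg (by rw [h]; exact lt_irrefl _), if_pos h]

lemma bmul_of_gt {s t : G × G} (h : t.1 < s.2) :
    bmul s t = (s.1, s.2 * t.1⁻¹ * t.2) := by
  unfold bmul
  rw [if_neg (not_lt.mpr h.le), if_neg (ne_of_gt h)]

/-- Outer step: `(1,a)·y = (1,1)` iff `y = (a,1)`, for positive `y`. -/
lemma aux_outer {a : G} (y : G × G) (hy2 : 1 ≤ y.2) :
    bmul (1, a) y = (1, 1) ↔ y = (a, 1) := by
  rcases lt_trichotomy a y.1 with h | h | h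
  · rw [bmul_of_lt (s := (1, a)) (t := y) h]
    constructor
    · rintro hh
      have h' : y.1 * a⁻¹ * 1 = 1 := (Prod.ext_iff.mp hh).1
      rw [mul_one, mul_inv_eq_one] at h'
      exact absurd h' (ne_of_gt h)
    · rintro hh
      exact absurd ((Prod.ext_iff.mp hh).1) (ne_of_gt h)
  · rw [bmul_of_eq' (s := (1, a)) (t := y) h]
    constructor
    · rintro hh
      exact Prod.ext h.symm (Prod.ext_iff.mp hh).2
    · rintro hh
      exact Prod.ext rfl (Prod.ext_iff.mp hh).2
  · rw [bmul_of_gt (s := (1, a)) (t := y) h]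
    have hgt : 1 < a * y.1⁻¹ := by simpa using mul_lt_mul_left h y.1⁻¹
    have hgt2 : 1 < a * y.1⁻¹ * y.2 :=
      lt_of_lt_of_le hgt (by simpa using mul_le_mul_right hy2 (a * y.1⁻¹))
    constructor
    · rintro hh
      exact absurd (Prod.ext_iff.mp hh).2.symm (ne_of_lt hgt2)
    · rintro hh
      exact absurd (Prod.ext_iff.mp hh).1 (ne_of_lt h)

/-- Inner step: `x·(b,1) = (a,1)` iff `x.2 ≤ b` and `b·x.2⁻¹·x.1 = a`. -/
lemma aux_inner {a b : G} (x : G × G) :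
    bmul x (b, 1) = (a, 1) ↔ x.2 ≤ b ∧ b * x.2⁻¹ * x.1 = a := by
  rcases lt_trichotomy x.2 b with h | h | h
  · rw [bmul_of_lt (s := x) (t := (b, 1)) h]
    constructor
    · rintro hh
      exact ⟨h.le, (Prod.ext_iff.mp hh).1⟩
    · rintro ⟨_, hh⟩
      exact Prod.ext hh rfl
  · rw [bmul_of_eq' (s := x) (t := (b, 1)) h]
    constructor
    · rintro hh
      refine ⟨h.le, ?_⟩
      rw [h, mul_inv_cancel, one_mul]
      exact (Prod.ext_iff.mp hh).1
    · rintro ⟨_, hh⟩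
      rw [h, mul_inv_cancel, one_mul] at hh
      exact Prod.ext hh rfl
  · rw [bmul_of_gt (s := x) (t := (b, 1)) h]
    constructor
    · rintro hh
      have h' : x.2 * b⁻¹ * 1 = 1 := (Prod.ext_iff.mp hh).2
      rw [mul_one, mul_inv_eq_one] at h'
      exact absurd h' (ne_of_gt h)
    · rintro ⟨hh, _⟩
      exact absurd hh (not_le.mpr h)

/-- If `u ≤ t.1` then `t` is a fixed point of `x ↦ q·(p·x)`. -/
lemma aux_fix_f {u : G} {t : G × G} (hmin : u ≤ t.1) :
    bmul (u, 1) (bmul (1, u) t) = t := by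
  rcases eq_or_lt_of_le hmin with h | h
  · rw [bmul_of_eq' (s := (1, u)) (t := t) h, bmul_of_eq' (s := (u, 1)) (t := (1, t.2)) rfl]
    exact Prod.ext h rfl
  · rw [bmul_of_lt (s := (1, u)) (t := t) h]
    have h1 : ((u : G), (1 : G)).2 < t.1 * u⁻¹ * 1 := by
      show (1 : G) < t.1 * u⁻¹ * 1
      rw [mul_one]
      simpa using mul_lt_mul_left h u⁻¹
    rw [bmul_of_lt (s := (u, 1)) (t := (t.1 * u⁻¹ * 1, t.2)) h1]
    exact Prod.ext (by group) rfl

/-- If `u ≤ t.2` then `t` is a fixed point of `x ↦ (x·q)·p`. -/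
lemma aux_fix_g {u : G} {t : G × G} (hmin : u ≤ t.2) :
    bmul (bmul t (u, 1)) (1, u) = t := by
  rcases eq_or_lt_of_le hmin with h | h
  · rw [bmul_of_eq' (s := t) (t := (u, 1)) h.symm, bmul_of_eq' (s := (t.1, 1)) (t := (1, u)) rfl]
    exact Prod.ext rfl h
  · rw [bmul_of_gt (s := t) (t := (u, 1)) h]
    have h1 : ((1 : G), (u : G)).1 < (t.1, t.2 * u⁻¹ * 1).2 := by
      show (1 : G) < t.2 * u⁻¹ * 1
      rw [mul_one]
      simpa using mul_lt_mul_left h u⁻¹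
    rw [bmul_of_gt (s := (t.1, t.2 * u⁻¹ * 1)) (t := (1, u)) h1]
    exact Prod.ext rfl (by group)

lemma aux_f_e {u : G} (hu1 : 1 < u) :
    bmul (u, 1) (bmul (1, u) ((1 : G), (1 : G))) ≠ (1, 1) := by
  rw [bmul_of_gt (s := ((1:G), u)) (t := ((1:G),(1:G))) hu1,
    bmul_of_eq' (s := (u, 1)) (t := (1, u * 1⁻¹ * 1)) rfl]
  intro h
  exact absurd (Prod.ext_iff.mp h).1 (ne_of_gt hu1)

lemma aux_g_e {u : G} (hu1 : 1 < u) :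
    bmul (bmul ((1 : G), (1 : G)) (u, 1)) (1, u) ≠ (1, 1) := by
  rw [bmul_of_lt (s := ((1:G),(1:G))) (t := (u, 1)) hu1,
    bmul_of_eq' (s := (u * 1⁻¹ * 1, 1)) (t := (1, u)) rfl]
  intro h
  exact absurd (Prod.ext_iff.mp h).2 (ne_of_gt hu1)

lemma aux_T_x0 {u a b : G} (h : u⁻¹ * b < b) :
    bmul (a, b) (u⁻¹ * b, 1) = (a, u) := by
  rw [bmul_of_gt (s := (a, b)) (t := (u⁻¹ * b, 1)) h]
  exact Prod.ext rfl (by group)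

lemma aux_T_S {u a b : G} (x : G × G) (h : x.2 ≤ u⁻¹ * b)
    (heq : b * x.2⁻¹ * x.1 = a) :
    bmul x (u⁻¹ * b, 1) = (u⁻¹ * a, 1) := by
  subst heq
  rcases eq_or_lt_of_le h with h' | h'
  · rw [bmul_of_eq' (s := x) (t := (u⁻¹ * b, 1)) h']
    refine Prod.ext ?_ rfl
    show x.1 = u⁻¹ * (b * x.2⁻¹ * x.1)
    rw [h']
    group
  · rw [bmul_of_lt (s := x) (t := (u⁻¹ * b, 1)) h']
    refine Prod.ext ?_ rfl
    show u⁻¹ * b * x.2⁻¹ * x.1 = u⁻¹ * (b * x.2⁻¹ * x.1)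
    group

end Aux

/-- Theorem 3.6 for `𝓑⁺(G)`: if a linearly ordered group `G` is not densely ordered,
then every Hausdorff topology on `𝓑⁺(G)` with separately continuous multiplication
is discrete. -/
theorem not_densely_ordered_implies_discrete_pos {G : Type*} [Group G] [LinearOrder G]
    [CovariantClass G G (· * ·) (· ≤ ·)]
    [CovariantClass G G (Function.swap (· * ·)) (· ≤ ·)]
    (hnd : ¬ ∀ g : G, 1 < g → ∃ h : G, 1 < h ∧ h < g)
    [TopologicalSpace (BPlus G)] [T2Space (BPlus G)]
    (hl : ∀ s : BPlus G, Continuous fun x : BPlus G => bmulPos s x)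
    (hr : ∀ s : BPlus G, Continuous fun x : BPlus G => bmulPos x s) :
    DiscreteTopology (BPlus G) := by
  push_neg at hnd
  obtain ⟨u, hu1, humin⟩ := hnd
  -- the distinguished elements p = (1,u) and q = (u,1)
  refine discreteTopology_iff_isOpen_singleton.mpr ?_
  have hu0 : (1 : G) ≤ u := hu1.le
  -- Step 1: the set `E = {x | x.1 = (1,1)}` (the singleton of the identity) is open,
  -- being the complement of the union of two fixed-point sets of continuous maps.
  have hEopen : IsOpen {x : BPlus G | x.1 = ((1 : G), (1 : G))} := by
    have h1 : IsClosed {x : BPlus G |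
        bmulPos ⟨(u, 1), hu0, le_refl 1⟩ (bmulPos ⟨(1, u), le_refl 1, hu0⟩ x) = x} :=
      isClosed_eq (Continuous.comp (hl ⟨(u, 1), hu0, le_refl 1⟩)
        (hl ⟨(1, u), le_refl 1, hu0⟩)) continuous_id
    have h2 : IsClosed {x : BPlus G |
        bmulPos (bmulPos x ⟨(u, 1), hu0, le_refl 1⟩) ⟨(1, u), le_refl 1, hu0⟩ = x} :=
      isClosed_eq (Continuous.comp (hr ⟨(1, u), le_refl 1, hu0⟩)
        (hr ⟨(u, 1), hu0, le_refl 1⟩)) continuous_id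
    have heq : {x : BPlus G | x.1 = ((1 : G), (1 : G))} =
        ({x : BPlus G |
          bmulPos ⟨(u, 1), hu0, le_refl 1⟩ (bmulPos ⟨(1, u), le_refl 1, hu0⟩ x) = x} ∪
         {x : BPlus G |
          bmulPos (bmulPos x ⟨(u, 1), hu0, le_refl 1⟩) ⟨(1, u), le_refl 1, hu0⟩ = x})ᶜ := by
      ext x
      simp only [Set.mem_setOf_eq, Set.mem_compl_iff, Set.mem_union, not_or]
      constructor
      · intro hx
        constructor
        · intro hfx
          have h3 : bmul (u, 1) (bmul (1, u) x.1) = x.1 := congrArg Subtype.val hfx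
          rw [hx] at h3
          exact aux_f_e hu1 h3
        · intro hgx
          have h3 : bmul (bmul x.1 (u, 1)) (1, u) = x.1 := congrArg Subtype.val hgx
          rw [hx] at h3
          exact aux_g_e hu1 h3
      · intro hx
        by_contra hne
        have h4 : x.1.1 ≠ 1 ∨ x.1.2 ≠ 1 := by
          by_contra h
          push_neg at h
          exact hne (Prod.ext h.1 h.2)
        rcases h4 with h | h
        · exact hx.1 (Subtype.ext (aux_fix_f (humin _ (lt_of_le_of_ne x.2.1 (Ne.symm h)))))
        · exact hx.2 (Subtype.ext (aux_fix_g (humin _ (lt_of_le_of_ne x.2.2 (Ne.symm h)))))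
    rw [heq]
    exact (h1.union h2).isOpen_compl
  -- Step 2: isolate an arbitrary point `(a,b)`.
  intro x0
  obtain ⟨⟨a, b⟩, ha, hb⟩ := x0
  have ha' : (1 : G) ≤ a := ha
  have hb' : (1 : G) ≤ b := hb
  -- The preimage `W` of `{(1,1)}` under `x ↦ (1,a)·(x·(b,1))`.
  obtain ⟨W, hWopen, hWmem⟩ : ∃ W : Set (BPlus G), IsOpen W ∧
      ∀ x : BPlus G, x ∈ W ↔ (x.1.2 ≤ b ∧ b * x.1.2⁻¹ * x.1.1 = a) := by
    refine ⟨(fun x : BPlus G =>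
        bmulPos ⟨(1, a), le_refl 1, ha'⟩ (bmulPos x ⟨(b, 1), hb', le_refl 1⟩)) ⁻¹'
        {x : BPlus G | x.1 = ((1 : G), (1 : G))},
      hEopen.preimage (Continuous.comp (hl _) (hr _)), ?_⟩
    intro x
    have hy2 : (1 : G) ≤ (bmul x.1 (b, 1)).2 := (bmul_mem x.2 ⟨hb', le_refl 1⟩).2
    have h0 : (bmulPos ⟨(1, a), le_refl 1, ha'⟩ (bmulPos x ⟨(b, 1), hb', le_refl 1⟩)).1 =
        bmul (1, a) (bmul x.1 (b, 1)) := rfl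
    simp only [Set.mem_preimage, Set.mem_setOf_eq]
    rw [h0, aux_outer _ hy2, aux_inner]
  have hx0W : (⟨(a, b), ha, hb⟩ : BPlus G) ∈ W :=
    (hWmem _).mpr ⟨le_refl b, by show b * b⁻¹ * a = a; group⟩
  rcases eq_or_lt_of_le hb' with hb1 | hb1
  · -- Case `b = 1`: `W` itself is the singleton.
    have hset : ({⟨(a, b), ha, hb⟩} : Set (BPlus G)) = W := by
      ext x
      show x = (⟨(a, b), ha, hb⟩ : BPlus G) ↔ x ∈ W
      constructor
      · rintro rfl; exact hx0W
      · intro hxW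
        obtain ⟨h1, h2⟩ := (hWmem x).mp hxW
        have hd : x.1.2 = b := le_antisymm h1 (by rw [← hb1]; exact x.2.2)
        apply Subtype.ext
        rw [hd, mul_inv_cancel, one_mul] at h2
        exact Prod.ext h2 hd
    rw [hset]; exact hWopen
  · -- Case `1 < b`: use the translation `T : x ↦ x·(u⁻¹b, 1)` and Hausdorffness.
    have hub : u ≤ b := humin b hb1
    have hc1 : (1 : G) ≤ u⁻¹ * b := by simpa using mul_le_mul_right hub u⁻¹
    have huinv : u⁻¹ < 1 := by simpa using mul_lt_mul_left hu1 u⁻¹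
    have hcb : u⁻¹ * b < b := by simpa using mul_lt_mul_left huinv b
    have hTx0 : (bmulPos ⟨(a, b), ha, hb⟩ ⟨(u⁻¹ * b, 1), hc1, le_refl 1⟩).1 =
        ((a : G), u) := aux_T_x0 hcb
    have hkey : ∀ x : BPlus G, x ∈ W → x ≠ (⟨(a, b), ha, hb⟩ : BPlus G) →
        (bmulPos x ⟨(u⁻¹ * b, 1), hc1, le_refl 1⟩).1 = (u⁻¹ * a, (1 : G)) := by
      intro x hxW hxne
      obtain ⟨h1, h2⟩ := (hWmem x).mp hxW
      have hdb : x.1.2 ≠ b := by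
        intro hdb
        apply hxne
        apply Subtype.ext
        rw [hdb, mul_inv_cancel, one_mul] at h2
        exact Prod.ext h2 hdb
      have hdlt : x.1.2 < b := lt_of_le_of_ne h1 hdb
      have h3 : 1 < b * x.1.2⁻¹ := by simpa using mul_lt_mul_left hdlt x.1.2⁻¹
      have h4 : u ≤ b * x.1.2⁻¹ := humin _ h3
      have h5 : u * x.1.2 ≤ b := by simpa using mul_le_mul_left h4 x.1.2
      have h6 : x.1.2 ≤ u⁻¹ * b := by simpa using mul_le_mul_right h5 u⁻¹
      exact aux_T_S x.1 h6 h2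
    by_cases hall : ∃ y ∈ W, y ≠ (⟨(a, b), ha, hb⟩ : BPlus G)
    case neg =>
      have hall' : ∀ x ∈ W, x = (⟨(a, b), ha, hb⟩ : BPlus G) := by
        intro x hx
        by_contra hxx
        exact hall ⟨x, hx, hxx⟩
      have hset : ({⟨(a, b), ha, hb⟩} : Set (BPlus G)) = W := by
        ext x
        show x = (⟨(a, b), ha, hb⟩ : BPlus G) ↔ x ∈ W
        exact ⟨fun h => h ▸ hx0W, fun h => hall' x h⟩
      rw [hset]; exact hWopen
    case pos =>
      obtain ⟨x1, hx1W, hx1ne⟩ := hall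
      have hT1 : (bmulPos x1 ⟨(u⁻¹ * b, 1), hc1, le_refl 1⟩).1 = (u⁻¹ * a, (1 : G)) :=
        hkey x1 hx1W hx1ne
      have hne : bmulPos (⟨(a, b), ha, hb⟩ : BPlus G) ⟨(u⁻¹ * b, 1), hc1, le_refl 1⟩ ≠
          bmulPos x1 ⟨(u⁻¹ * b, 1), hc1, le_refl 1⟩ := by
        intro h
        have h' := congrArg Subtype.val h
        rw [hTx0, hT1] at h'
        exact absurd (Prod.ext_iff.mp h').2 (ne_of_gt hu1)
      obtain ⟨U, V, hU, hV, hmemU, hmemV, hUV⟩ := t2_separation hne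
      have hset : ({⟨(a, b), ha, hb⟩} : Set (BPlus G)) =
          ((fun x : BPlus G => bmulPos x ⟨(u⁻¹ * b, 1), hc1, le_refl 1⟩) ⁻¹' U) ∩ W := by
        ext x
        simp only [Set.mem_singleton_iff, Set.mem_inter_iff, Set.mem_preimage]
        constructor
        · rintro rfl; exact ⟨hmemU, hx0W⟩
        · rintro ⟨hxU, hxW⟩
          by_contra hxne
          have hTx : bmulPos x ⟨(u⁻¹ * b, 1), hc1, le_refl 1⟩ =
              bmulPos x1 ⟨(u⁻¹ * b, 1), hc1, le_refl 1⟩ :=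
            Subtype.ext (by rw [hkey x hxW hxne, hT1])
          have hxV : bmulPos x ⟨(u⁻¹ * b, 1), hc1, le_refl 1⟩ ∈ V := by
            rw [hTx]; exact hmemV
          exact Set.disjoint_left.mp hUV hxU hxV
      rw [hset]
      exact (hU.preimage (hr _)).inter hWopen
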